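/- Let p, k ≥ 2 and n ≥ 1 be integers. Set w = ⌈(2·⌈n²p(p−1)/(2k)⌉)/p⌉, and let a and r be the integers determined by w = a·(p−1)·n + r with 0 ≤ r < (p−1)n. If r·C(a+1,2) + ((p−1)n − r)·C(a,2) > C(n,2), then every coloring of the edges of the complete p-partite graph K_n^p (p parts, each of size n) with k colors contains a monochromatic cycle C_4; equivalently, r_p(C_4,k) ≤ n. -/

import Mathlib

open Finset

set_option maxHeartbeats 1000000

lemma two_mul_choose_two' (m : ℕ) : 2 * m.choose 2 = m * (m - 1) := by
  have h : 2 ∣ m * (m - 1) := by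
    rcases m with _ | t
    · simp
    · simpa [Nat.succ_sub_one, mul_comm] using (Nat.even_mul_succ_self t).two_dvd
  rw [Nat.choose_two_right, Nat.mul_div_cancel' h]

lemma int_two_mul_choose_two (m : ℕ) : 2 * (m.choose 2 : ℤ) = m * (m - 1) := by
  rcases m with _ | t
  · simp
  · have h := two_mul_choose_two' (t + 1)
    simp only [Nat.succ_sub_one] at h
    have h2 : ((2 * (t + 1).choose 2 : ℕ) : ℤ) = (((t + 1) * t : ℕ) : ℤ) := by rw [h]
    push_cast at h2 ⊢
    linear_combination h2

lemma choose_two_tangent (x a : ℕ) :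
    (a : ℤ) * ((x : ℤ) - a) + a.choose 2 ≤ x.choose 2 := by
  have hx := int_two_mul_choose_two x
  have ha := int_two_mul_choose_two a
  have ht : ((x : ℤ) - a) ≤ ((x : ℤ) - a) ^ 2 := Int.le_self_sq _
  nlinarith [ht, hx, ha]

lemma card_part_ne (p n : ℕ) (j : Fin p) :
    ((univ : Finset (Fin p × Fin n)).filter fun v => v.1 ≠ j).card = (p - 1) * n := by
  have h : ((univ : Finset (Fin p × Fin n)).filter fun v => v.1 ≠ j)
      = (univ.erase j) ×ˢ univ := by
    ext v
    simp [Finset.mem_erase, and_comm]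
  rw [h, Finset.card_product, Finset.card_erase_of_mem (mem_univ j)]
  simp



/-- The complete multipartite graph with `p` parts, each of size `n`:
vertices are pairs `(part, index)`, adjacent iff they lie in different parts. -/
def completeMultipartite (p n : ℕ) : SimpleGraph (Fin p × Fin n) where
  Adj v w := v.1 ≠ w.1
  symm := ⟨fun _ _ h => h.symm⟩
  loopless := ⟨fun _ h => h rfl⟩

instance (p n : ℕ) : DecidableRel (completeMultipartite p n).Adj :=
  fun v w => inferInstanceAs (Decidable (v.1 ≠ w.1))

/-- The edge coloring `c` contains a monochromatic cycle `C₄` in the graph `G`. -/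
def HasMonoC4 {V : Type*} (G : SimpleGraph V) {k : ℕ} (c : Sym2 V → Fin k) : Prop :=
  ∃ v₁ v₂ v₃ v₄ : V,
    v₁ ≠ v₂ ∧ v₁ ≠ v₃ ∧ v₁ ≠ v₄ ∧ v₂ ≠ v₃ ∧ v₂ ≠ v₄ ∧ v₃ ≠ v₄ ∧
    G.Adj v₁ v₂ ∧ G.Adj v₂ v₃ ∧ G.Adj v₃ v₄ ∧ G.Adj v₄ v₁ ∧
    c s(v₁, v₂) = c s(v₂, v₃) ∧ c s(v₂, v₃) = c s(v₃, v₄) ∧ c s(v₃, v₄) = c s(v₄, v₁)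

/-- The `p`-partite Ramsey number `r_p(C₄, k)`: the least positive `n` such that every
`k`-coloring of the edges of `K_n^p` contains a monochromatic `C₄`. -/
noncomputable def multipartiteRamsey (p k : ℕ) : ℕ :=
  sInf {n : ℕ | 0 < n ∧
    ∀ c : Sym2 (Fin p × Fin n) → Fin k, HasMonoC4 (completeMultipartite p n) c}

/-- If `w = ⌈2⌈n²p(p-1)/(2k)⌉/p⌉ = a(p-1)n + r` with `0 ≤ r < (p-1)n` and
`r·C(a+1,2) + ((p-1)n - r)·C(a,2) > C(n,2)`, then every `k`-coloring of the edges of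
`K_n^p` contains a monochromatic `C₄`; equivalently `r_p(C₄,k) ≤ n`. -/
theorem multipartiteRamsey_le_of_ineq (p k n : ℕ) (hp : 2 ≤ p) (hk : 2 ≤ k) (hn : 1 ≤ n)
    (w a r : ℕ)
    (hw : w = ⌈(2 * (⌈((n : ℚ) ^ 2 * p * ((p : ℚ) - 1)) / (2 * k)⌉₊ : ℚ)) / (p : ℚ)⌉₊)
    (har : w = a * ((p - 1) * n) + r) (hr : r < (p - 1) * n)
    (hineq : n.choose 2 < r * (a + 1).choose 2 + ((p - 1) * n - r) * a.choose 2) :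
    (∀ c : Sym2 (Fin p × Fin n) → Fin k, HasMonoC4 (completeMultipartite p n) c) ∧
      multipartiteRamsey p k ≤ n := by
  have key : ∀ c : Sym2 (Fin p × Fin n) → Fin k, HasMonoC4 (completeMultipartite p n) c := by
    intro c
    by_contra hc
    classical
    set col : (Fin p × Fin n) × (Fin p × Fin n) → Fin k := fun x => c s(x.1, x.2) with hcol
    have hcolswap : ∀ x : (Fin p × Fin n) × (Fin p × Fin n), col (x.2, x.1) = col x := fun x => congrArg c Sym2.eq_swap
    set D : Finset ((Fin p × Fin n) × (Fin p × Fin n)) := univ.filter fun x => x.1.1 ≠ x.2.1 with hDdef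
    -- cardinality of D
    have hD : D.card = n ^ 2 * p * (p - 1) := by
      have h1 : D.card = ∑ v : (Fin p × Fin n), (D.filter fun x => x.1 = v).card :=
        Finset.card_eq_sum_card_fiberwise (fun x _ => mem_univ _)
      have h2 : ∀ v : (Fin p × Fin n), (D.filter fun x => x.1 = v).card = (p - 1) * n := by
        intro v
        have he : (D.filter fun x => x.1 = v)
            = {v} ×ˢ ((univ : Finset (Fin p × Fin n)).filter fun u => u.1 ≠ v.1) := by
          ext x
          simp only [hDdef, Finset.mem_filter, Finset.mem_univ, true_and,
            Finset.mem_product, Finset.mem_singleton]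
          constructor
          · rintro ⟨hne, rfl⟩; exact ⟨rfl, fun h => hne (h.symm)⟩
          · rintro ⟨rfl, hne⟩; exact ⟨fun h => hne h.symm, rfl⟩
        rw [he, Finset.card_product, Finset.card_singleton, one_mul, card_part_ne]
      rw [h1]
      simp only [h2, Finset.sum_const, Finset.card_univ, smul_eq_mul]
      have : Fintype.card (Fin p × Fin n) = p * n := by simp
      rw [this]
      ring
    -- pigeonhole over colors
    set ec : Fin k → ℕ := fun i => (D.filter fun x => col x = i).card with hec
    have hsumc : ∑ i : Fin k, ec i = D.card :=
      (Finset.card_eq_sum_card_fiberwise (f := col)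
        (fun x _ => mem_univ _)).symm
    obtain ⟨i, -, hi⟩ : ∃ i ∈ (univ : Finset (Fin k)), D.card ≤ k * ec i := by
      apply Finset.exists_le_of_sum_le (f := fun _ => D.card) (g := fun i => k * ec i)
        ⟨⟨0, by omega⟩, mem_univ _⟩
      rw [Finset.sum_const, Finset.card_univ, Fintype.card_fin, smul_eq_mul, ← Finset.mul_sum,
        hsumc]
    -- the color class, evenness
    set Di : Finset ((Fin p × Fin n) × (Fin p × Fin n)) := D.filter fun x => col x = i with hDi
    have hswap : ∀ x : (Fin p × Fin n) × (Fin p × Fin n), x ∈ Di → (x.2, x.1) ∈ Di := by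
      intro x hx
      simp only [hDi, hDdef, Finset.mem_filter, Finset.mem_univ, true_and] at hx ⊢
      exact ⟨fun h => hx.1 h.symm, by rw [hcolswap]; exact hx.2⟩
    have heven : Di.card = 2 * (Di.filter fun x => x.1.1 < x.2.1).card := by
      have hsplit := Finset.card_filter_add_card_filter_not
        (s := Di) (p := fun x => x.1.1 < x.2.1)
      have hbij : (Di.filter fun x => ¬ x.1.1 < x.2.1).card
          = (Di.filter fun x => x.1.1 < x.2.1).card := by
        apply Finset.card_nbij' (fun x => (x.2, x.1)) (fun x => (x.2, x.1))
        · intro x hx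
          simp only [Finset.mem_coe, Finset.mem_filter] at hx ⊢
          have hne : x.1.1 ≠ x.2.1 := by
            have := hx.1
            simp only [hDi, hDdef, Finset.mem_filter, Finset.mem_univ, true_and] at this
            exact this.1
          exact ⟨hswap x hx.1, by omega⟩
        · intro x hx
          simp only [Finset.mem_coe, Finset.mem_filter] at hx ⊢
          exact ⟨hswap x hx.1, by omega⟩
        · intro x _; rfl
        · intro x _; rfl
      omega
    -- the half-count of the color class exceeds m
    set m : ℕ := ⌈((n : ℚ) ^ 2 * p * ((p : ℚ) - 1)) / (2 * k)⌉₊ with hm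
    have hNm : ((n : ℚ) ^ 2 * p * ((p : ℚ) - 1)) = ((n ^ 2 * p * (p - 1) : ℕ) : ℚ) := by
      have h1 : ((p - 1 : ℕ) : ℚ) = (p : ℚ) - 1 := by
        push_cast [Nat.cast_sub (by omega : 1 ≤ p)]; ring
      push_cast [h1]; ring
    have h2m : 2 * m ≤ ec i := by
      have hcard : ec i = 2 * (Di.filter fun x => x.1.1 < x.2.1).card := heven
      set h : ℕ := (Di.filter fun x => x.1.1 < x.2.1).card
      have hmh : m ≤ h := by
        rw [hm]
        apply Nat.ceil_le.mpr
        rw [hNm, div_le_iff₀ (by positivity)]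
        have : (n ^ 2 * p * (p - 1) : ℕ) ≤ h * (2 * k) := by
          calc (n ^ 2 * p * (p - 1) : ℕ) = D.card := hD.symm
            _ ≤ k * ec i := hi
            _ = k * (2 * h) := by rw [hcard]
            _ = h * (2 * k) := by ring
        exact_mod_cast this
      omega
    -- pigeonhole over parts
    have hsump : ∑ j : Fin p, (Di.filter fun x => x.2.1 = j).card = Di.card :=
      (Finset.card_eq_sum_card_fiberwise (f := fun x : (Fin p × Fin n) × (Fin p × Fin n) => x.2.1)
        (fun x _ => mem_univ _)).symm
    obtain ⟨j, -, hj⟩ : ∃ j ∈ (univ : Finset (Fin p)),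
        Di.card ≤ p * (Di.filter fun x => x.2.1 = j).card := by
      apply Finset.exists_le_of_sum_le (f := fun _ => Di.card)
        (g := fun j => p * (Di.filter fun x => x.2.1 = j).card) ⟨⟨0, by omega⟩, mem_univ _⟩
      rw [Finset.sum_const, Finset.card_univ, Fintype.card_fin, smul_eq_mul, ← Finset.mul_sum,
        hsump]
    set T : ℕ := (Di.filter fun x => x.2.1 = j).card with hT
    have hwT : w ≤ T := by
      rw [hw]
      apply Nat.ceil_le.mpr
      rw [div_le_iff₀ (by positivity)]
      have : 2 * m ≤ T * p := by
        calc 2 * m ≤ ec i := h2m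
          _ = Di.card := rfl
          _ ≤ p * T := hj
          _ = T * p := by ring
      exact_mod_cast this
    -- the part S of vertices outside part j, and degrees into part j
    set S : Finset (Fin p × Fin n) := univ.filter (fun v => v.1 ≠ j) with hSdef
    have hScard : S.card = (p - 1) * n := card_part_ne p n j
    set N : (Fin p × Fin n) → Finset (Fin n) := fun v => univ.filter (fun u => col (v, (j, u)) = i) with hNdef
    set d : (Fin p × Fin n) → ℕ := fun v => (N v).card with hd
    have hTd : ∑ v ∈ S, d v = T := by
      rw [hT, Finset.card_eq_sum_card_fiberwise (f := fun x : (Fin p × Fin n) × (Fin p × Fin n) => x.1) (t := S) ?mem]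
      case mem =>
        intro x hx
        simp only [Finset.mem_coe, hDi, hDdef, Finset.mem_filter, Finset.mem_univ, true_and] at hx
        simp only [Finset.mem_coe, hSdef, Finset.mem_filter, Finset.mem_univ, true_and]
        rw [← hx.2]
        exact hx.1.1
      apply Finset.sum_congr rfl
      intro v hv
      have hvS : v.1 ≠ j := by
        simpa only [hSdef, Finset.mem_filter, Finset.mem_univ, true_and] using hv
      symm
      apply Finset.card_nbij' (fun x : (Fin p × Fin n) × (Fin p × Fin n) => x.2.2) (fun u => (v, (j, u)))
      · rintro ⟨x1, x21, x22⟩ hx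
        simp only [Finset.mem_coe, hDi, hDdef, Finset.mem_filter, Finset.mem_univ, true_and] at hx
        obtain ⟨⟨⟨hne, hcoli⟩, hx2⟩, hx1⟩ := hx
        subst hx1; subst hx2
        simp only [Finset.mem_coe, hNdef, Finset.mem_filter, Finset.mem_univ, true_and]
        exact hcoli
      · intro u hu
        have hcu : col (v, (j, u)) = i := by
          simpa only [Finset.mem_coe, hNdef, Finset.mem_filter, Finset.mem_univ, true_and] using hu
        exact Finset.mem_filter.mpr ⟨Finset.mem_filter.mpr ⟨Finset.mem_filter.mpr
          ⟨Finset.mem_filter.mpr ⟨Finset.mem_univ _, hvS⟩, hcu⟩, rfl⟩, rfl⟩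
      · rintro ⟨x1, x21, x22⟩ hx
        simp only [Finset.mem_coe, hDi, hDdef, Finset.mem_filter, Finset.mem_univ, true_and] at hx
        obtain ⟨⟨⟨hne, hcoli⟩, hx2⟩, hx1⟩ := hx
        subst hx1; subst hx2
        rfl
      · intro u _; rfl
    have hwd : a * S.card + r ≤ ∑ v ∈ S, d v := by
      rw [hTd, hScard, ← har]
      exact hwT
    -- no two outside vertices share two neighbours in part j
    have hone : ∀ P ∈ Finset.powersetCard 2 (univ : Finset (Fin n)),
        (S.filter fun v => P ⊆ N v).card ≤ 1 := by
      intro P hP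
      rw [Finset.card_le_one]
      intro v hv v' hv'
      by_contra hne
      obtain ⟨u₁, u₂, hu, rfl⟩ := Finset.card_eq_two.mp (Finset.mem_powersetCard.mp hP).2
      simp only [hSdef, Finset.mem_filter, Finset.mem_univ, true_and] at hv hv'
      obtain ⟨hvS, hvP⟩ := hv
      obtain ⟨hv'S, hv'P⟩ := hv'
      have h1 : col (v, (j, u₁)) = i := by
        have := hvP (Finset.mem_insert_self u₁ {u₂})
        simpa only [hNdef, Finset.mem_filter, Finset.mem_univ, true_and] using this
      have h2 : col (v', (j, u₁)) = i := by
        have := hv'P (Finset.mem_insert_self u₁ {u₂})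
        simpa only [hNdef, Finset.mem_filter, Finset.mem_univ, true_and] using this
      have h3 : col (v, (j, u₂)) = i := by
        have := hvP (Finset.mem_insert_of_mem (Finset.mem_singleton_self u₂))
        simpa only [hNdef, Finset.mem_filter, Finset.mem_univ, true_and] using this
      have h4 : col (v', (j, u₂)) = i := by
        have := hv'P (Finset.mem_insert_of_mem (Finset.mem_singleton_self u₂))
        simpa only [hNdef, Finset.mem_filter, Finset.mem_univ, true_and] using this
      apply hc
      refine ⟨v, (j, u₁), v', (j, u₂), fun h => hvS (by rw [h]), hne,
        fun h => hvS (by rw [h]), fun h => hv'S (by rw [← h]),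
        fun h => hu (congrArg Prod.snd h), fun h => hv'S (by rw [h]),
        hvS, fun h => hv'S h.symm, hv'S, fun h => hvS h.symm, ?_, ?_, ?_⟩
      · show c s(v, (j, u₁)) = c s((j, u₁), v')
        rw [show (s((j, u₁), v') : Sym2 (Fin p × Fin n)) = s(v', (j, u₁)) from Sym2.eq_swap]
        exact h1.trans h2.symm
      · show c s((j, u₁), v') = c s(v', (j, u₂))
        rw [show (s((j, u₁), v') : Sym2 (Fin p × Fin n)) = s(v', (j, u₁)) from Sym2.eq_swap]
        exact h2.trans h4.symm
      · show c s(v', (j, u₂)) = c s((j, u₂), v)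
        rw [show (s((j, u₂), v) : Sym2 (Fin p × Fin n)) = s(v, (j, u₂)) from Sym2.eq_swap]
        exact h4.trans h3.symm
    -- double counting pairs
    have hcount : ∑ v ∈ S, (d v).choose 2 ≤ n.choose 2 := by
      have hstep : ∀ v ∈ S, (d v).choose 2
          = ∑ P ∈ Finset.powersetCard 2 (univ : Finset (Fin n)), if P ⊆ N v then 1 else 0 := by
        intro v _
        have he : Finset.powersetCard 2 (N v)
            = (Finset.powersetCard 2 (univ : Finset (Fin n))).filter (fun P => P ⊆ N v) := by
          ext P
          simp only [Finset.mem_powersetCard, Finset.mem_filter]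
          exact ⟨fun ⟨h1, h2⟩ => ⟨⟨Finset.subset_univ P, h2⟩, h1⟩, fun ⟨⟨_, h2⟩, h1⟩ => ⟨h1, h2⟩⟩
        rw [show d v = (N v).card from rfl, ← Finset.card_powersetCard, he, Finset.card_filter]
      calc ∑ v ∈ S, (d v).choose 2
          = ∑ v ∈ S, ∑ P ∈ Finset.powersetCard 2 (univ : Finset (Fin n)), if P ⊆ N v then 1 else 0 :=
            Finset.sum_congr rfl hstep
        _ = ∑ P ∈ Finset.powersetCard 2 (univ : Finset (Fin n)), ∑ v ∈ S, if P ⊆ N v then 1 else 0 :=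
            Finset.sum_comm
        _ ≤ ∑ _P ∈ Finset.powersetCard 2 (univ : Finset (Fin n)), 1 := by
            apply Finset.sum_le_sum
            intro P hP
            rw [← Finset.card_filter]
            exact hone P hP
        _ = n.choose 2 := by
            rw [Finset.sum_const, smul_eq_mul, mul_one, Finset.card_powersetCard,
              Finset.card_univ, Fintype.card_fin]
    -- convexity bound
    have hchain : (S.card : ℤ) * a.choose 2 + a * r ≤ ∑ v ∈ S, ((d v).choose 2 : ℤ) := by
      have h1 : ∑ v ∈ S, ((a : ℤ) * ((d v : ℤ) - a) + a.choose 2)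
          ≤ ∑ v ∈ S, ((d v).choose 2 : ℤ) :=
        Finset.sum_le_sum (fun v _ => choose_two_tangent (d v) a)
      have h2 : ∑ v ∈ S, ((a : ℤ) * ((d v : ℤ) - a) + a.choose 2)
          = (a : ℤ) * (∑ v ∈ S, (d v : ℤ)) - S.card * ((a : ℤ) * a) + S.card * a.choose 2 := by
        rw [Finset.sum_add_distrib, Finset.sum_const, ← Finset.mul_sum, Finset.sum_sub_distrib,
          Finset.sum_const, nsmul_eq_mul, nsmul_eq_mul]
        ring
      have h3 : (a : ℤ) * S.card + r ≤ ∑ v ∈ S, (d v : ℤ) := by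
        have := hwd
        push_cast
        exact_mod_cast by exact_mod_cast Nat.cast_le.mpr this
      have h4 := mul_le_mul_of_nonneg_left h3 (by positivity : (0 : ℤ) ≤ a)
      rw [h2] at h1
      nlinarith [h1, h4]
    -- final contradiction
    have hc2 : ((a + 1).choose 2 : ℤ) = a.choose 2 + a := by
      have h : (a + 1).choose 2 = a.choose 2 + a := by
        rw [Nat.choose_succ_succ, Nat.choose_one_right]
        show a + a.choose 2 = a.choose 2 + a
        omega
      exact_mod_cast h
    have hineqZ : (n.choose 2 : ℤ) < (S.card : ℤ) * a.choose 2 + a * r := by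
      have h0 : (n.choose 2 : ℤ)
          < (r : ℤ) * ((a + 1).choose 2 : ℤ) + (((p - 1) * n - r : ℕ) : ℤ) * (a.choose 2 : ℤ) := by
        exact_mod_cast hineq
      have hsub : (((p - 1) * n - r : ℕ) : ℤ) = (((p - 1) * n : ℕ) : ℤ) - (r : ℤ) :=
        Nat.cast_sub hr.le
      rw [hsub, hc2] at h0
      have hSeq : ((S.card : ℤ)) = (((p - 1) * n : ℕ) : ℤ) := by exact_mod_cast hScard
      rw [hSeq]
      nlinarith [h0]
    have hcountZ : ∑ v ∈ S, ((d v).choose 2 : ℤ) ≤ (n.choose 2 : ℤ) := by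
      calc ∑ v ∈ S, ((d v).choose 2 : ℤ) = ((∑ v ∈ S, (d v).choose 2 : ℕ) : ℤ) := by
            rw [Nat.cast_sum]
        _ ≤ (n.choose 2 : ℤ) := by exact_mod_cast hcount
    linarith [hchain, hineqZ, hcountZ]

  exact ⟨key, Nat.sInf_le ⟨by omega, key⟩⟩
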